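/- Let S_n (n ≥ 3) be the n×n circulant-like matrix with diagonal entries a, superdiagonal entries b, subdiagonal entries c, corner entries (S_n)_{1,n} = c and (S_n)_{n,1} = b, and all other entries 0. If x₁, x₂ are the roots of x² − a x + bc = 0, then det(S_n) = x₁^n + x₂^n + (−1)^{n+1}(b^n + c^n). -/

import Mathlib

open Matrix

private lemma valsucc {N : ℕ} (i : Fin (N+1)) :
    ((i + 1 : Fin (N+1)) : ℕ) = if (i:ℕ) = N then 0 else (i:ℕ)+1 := by
  rw [Fin.val_add_one]
  simp [Fin.ext_iff]

private lemma keyDet (m : ℕ) (s t : ℂ) :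
    (Matrix.of fun i j : Fin (m + 2) => if j = i + 1 then t else if i = j then s else 0).det
      = s ^ (m + 2) + (-1 : ℂ) ^ (m + 1) * t ^ (m + 2) := by
  set A : Matrix (Fin (m+2)) (Fin (m+2)) ℂ :=
    Matrix.of fun i j : Fin (m + 2) => if j = i + 1 then t else if i = j then s else 0 with hA
  have hdet := Matrix.det_succ_column_zero A
  rw [hdet, Fin.sum_univ_succ]
  have h0 : A 0 0 = s := by simp [hA]
  have hM0 : (A.submatrix (Fin.succAbove 0) Fin.succ).det = s ^ (m+1) := by
    rw [Matrix.det_of_upperTriangular]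
    · have hdiag : ∀ i : Fin (m+1), (A.submatrix (Fin.succAbove 0) Fin.succ) i i = s := by
        intro i
        simp only [Matrix.submatrix_apply, Fin.succAbove_zero, hA, of_apply]
        rw [if_neg]
        · simp
        intro h
        have := congrArg Fin.val h
        rw [valsucc] at this
        simp only [Fin.val_succ] at this
        split_ifs at this <;> omega
      rw [Finset.prod_congr rfl (fun i _ => hdiag i)]
      simp
    · intro i j hij
      simp only [id_eq] at hij
      simp only [Matrix.submatrix_apply, Fin.succAbove_zero, hA, of_apply]
      rw [if_neg, if_neg]
      · intro h
        have := congrArg Fin.val h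
        simp only [Fin.val_succ] at this
        have : (j:ℕ) = (i:ℕ) := by omega
        exact absurd (Fin.ext this) (ne_of_lt hij)
      · intro h
        have := congrArg Fin.val h
        rw [valsucc] at this
        simp only [Fin.val_succ] at this
        have hji : (j:ℕ) < (i:ℕ) := hij
        split_ifs at this <;> omega
  have htail : ∀ i : Fin (m+1), i ≠ Fin.last m →
      (-1:ℂ) ^ ((i.succ : Fin (m+2)) : ℕ) * A i.succ 0 *
        (A.submatrix i.succ.succAbove Fin.succ).det = 0 := by
    intro i hi
    have hz : A i.succ 0 = 0 := by
      simp only [hA, of_apply]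
      rw [if_neg, if_neg]
      · exact (Fin.succ_ne_zero i)
      · intro h
        have := congrArg Fin.val h
        rw [valsucc] at this
        simp only [Fin.val_zero, Fin.val_succ] at this
        have hne : (i:ℕ) ≠ m := fun h' => hi (Fin.ext (by simp [h']))
        split_ifs at this <;> omega
    rw [hz]; ring
  rw [Finset.sum_eq_single_of_mem (Fin.last m) (Finset.mem_univ _) (fun i _ hi => htail i hi)]
  have hlast : (Fin.last m).succ = Fin.last (m+1) := rfl
  have hAl : A (Fin.last m).succ 0 = t := by
    simp only [hA, of_apply, hlast]
    rw [if_pos]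
    apply Fin.ext
    rw [valsucc]
    simp
  have hMl : (A.submatrix (Fin.last m).succ.succAbove Fin.succ).det = t ^ (m+1) := by
    rw [hlast, Fin.succAbove_last, Matrix.det_of_lowerTriangular]
    · have hdiag : ∀ i : Fin (m+1), (A.submatrix Fin.castSucc Fin.succ) i i = t := by
        intro i
        simp only [Matrix.submatrix_apply, hA, of_apply]
        rw [if_pos]
        apply Fin.ext
        rw [valsucc]
        simp only [Fin.val_succ, Fin.coe_castSucc]
        rw [if_neg (by omega)]
      rw [Finset.prod_congr rfl (fun i _ => hdiag i)]
      simp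
    · intro i j hij
      have hij' : (i:ℕ) < (j:ℕ) := hij
      simp only [Matrix.submatrix_apply, hA, of_apply]
      rw [if_neg, if_neg]
      · intro h
        have := congrArg Fin.val h
        simp only [Fin.val_succ, Fin.coe_castSucc] at this
        omega
      · intro h
        have := congrArg Fin.val h
        rw [valsucc] at this
        simp only [Fin.val_succ, Fin.coe_castSucc] at this
        split_ifs at this <;> omega
  rw [h0, hM0, hAl, hMl, hlast]
  simp only [Fin.val_zero, Fin.val_last, pow_zero]
  ring

private lemma keyDet' (m : ℕ) (s t : ℂ) :
    (Matrix.of fun i j : Fin (m + 3) => if j = i + 1 then t else if i = j then s else 0).det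
      = s ^ (m + 3) + (-1 : ℂ) ^ (m + 2) * t ^ (m + 3) :=
  keyDet (m + 1) s t

private def cyc (m : ℕ) : Matrix (Fin (m+3)) (Fin (m+3)) ℂ :=
  Matrix.of fun i j => if j = i + 1 then (1:ℂ) else 0

private lemma cyc_transpose_mul (m : ℕ) : (cyc m)ᵀ * cyc m = 1 := by
  ext i j
  rw [Matrix.mul_apply]
  rw [Finset.sum_eq_single (i - 1)]
  · have h1 : i - 1 + 1 = i := sub_add_cancel i 1
    simp [cyc, Matrix.transpose_apply, h1, Matrix.one_apply, eq_comm]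
  · intro k _ hk
    simp only [cyc, Matrix.transpose_apply, of_apply]
    rw [if_neg]
    · ring
    · intro h
      apply hk
      rw [h]
      rw [add_sub_cancel_right]
  · simp

private lemma smulForm (m : ℕ) (s t : ℂ) :
    t • cyc m + s • (1 : Matrix (Fin (m+3)) (Fin (m+3)) ℂ)
      = Matrix.of fun i j : Fin (m+3) => if j = i + 1 then t else if i = j then s else 0 := by
  ext i j
  have hx : ¬ (j = i + 1 ∧ i = j) := by
    rintro ⟨h1, h2⟩
    have hv := congrArg Fin.val h1
    rw [valsucc] at hv
    have hv2 := congrArg Fin.val h2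
    split_ifs at hv <;> omega
  simp only [cyc, Matrix.add_apply, Matrix.smul_apply, Matrix.one_apply, of_apply, smul_eq_mul]
  split_ifs with h1 h2 h2
  · exact absurd ⟨h1, h2⟩ hx
  all_goals ring

private lemma cyc_det (m : ℕ) : (cyc m).det = (-1:ℂ) ^ (m + 2) := by
  have h1 : cyc m
      = Matrix.of fun i j : Fin (m+3) => if j = i + 1 then (1:ℂ) else if i = j then 0 else 0 := by
    ext i j
    simp only [cyc, of_apply]
    split_ifs <;> rfl
  rw [h1, keyDet']
  simp

private lemma matForm (m : ℕ) (a b c : ℂ) :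
    (Matrix.of fun i j : Fin (m+3) =>
        if (i : ℕ) = (j : ℕ) then a
        else if (j : ℕ) = (i : ℕ) + 1 then b
        else if (i : ℕ) = (j : ℕ) + 1 then c
        else if (i : ℕ) = 0 ∧ (j : ℕ) = m + 3 - 1 then c
        else if (i : ℕ) = m + 3 - 1 ∧ (j : ℕ) = 0 then b
        else 0)
      = a • (1 : Matrix (Fin (m+3)) (Fin (m+3)) ℂ) + b • cyc m + c • (cyc m)ᵀ := by
  ext i j
  have hvi := i.isLt
  have hvj := j.isLt
  simp only [cyc, Matrix.add_apply, Matrix.smul_apply, Matrix.one_apply,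
    Matrix.transpose_apply, of_apply, smul_eq_mul, Fin.ext_iff, valsucc]
  split_ifs <;> first | ring1 | (exfalso; omega)

theorem stmt2 (n : ℕ) (hn : 3 ≤ n) (a b c x1 x2 : ℂ)
    (hsum : x1 + x2 = a) (hprod : x1 * x2 = b * c) :
    (Matrix.of fun i j : Fin n =>
        if (i : ℕ) = (j : ℕ) then a
        else if (j : ℕ) = (i : ℕ) + 1 then b
        else if (i : ℕ) = (j : ℕ) + 1 then c
        else if (i : ℕ) = 0 ∧ (j : ℕ) = n - 1 then c
        else if (i : ℕ) = n - 1 ∧ (j : ℕ) = 0 then b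
        else 0).det
      = x1 ^ n + x2 ^ n + (-1 : ℂ) ^ (n + 1) * (b ^ n + c ^ n) := by
  obtain ⟨m, rfl⟩ : ∃ m, n = m + 3 := ⟨n - 3, by omega⟩
  rw [matForm]
  have hε4 : (-1 : ℂ) ^ (m + 3 + 1) = (-1) ^ (m + 2) := by
    rw [show m + 3 + 1 = (m + 2) + 2 from by omega, pow_add]
    norm_num
  rw [hε4]
  have hε2 : ((-1 : ℂ) ^ (m + 2)) * ((-1 : ℂ) ^ (m + 2)) = 1 := by
    rw [← pow_add, ← two_mul, pow_mul]
    norm_num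
  by_cases hb : b = 0
  · subst hb
    have hT : a • (1 : Matrix (Fin (m+3)) (Fin (m+3)) ℂ) + (0:ℂ) • cyc m + c • (cyc m)ᵀ
        = (c • cyc m + a • 1)ᵀ := by
      rw [Matrix.transpose_add, Matrix.transpose_smul, Matrix.transpose_smul,
        Matrix.transpose_one]
      module
    rw [hT, Matrix.det_transpose, smulForm, keyDet']
    have h0 : x1 * x2 = 0 := by rw [hprod]; ring
    rcases mul_eq_zero.mp h0 with h0 | h0
    · have hx2 : x2 = a := by rw [← hsum, h0]; ring
      rw [h0, hx2, zero_pow (by omega : m + 3 ≠ 0)]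
      ring
    · have hx1 : x1 = a := by rw [← hsum, h0]; ring
      rw [h0, hx1, zero_pow (by omega : m + 3 ≠ 0)]
      ring
  · set M : Matrix (Fin (m+3)) (Fin (m+3)) ℂ := a • 1 + b • cyc m + c • (cyc m)ᵀ with hM
    have hfac : (b • cyc m + x1 • 1) * (b • cyc m + x2 • 1) = b • (M * cyc m) := by
      rw [hM]
      simp only [Matrix.add_mul, Matrix.mul_add, Matrix.smul_mul, Matrix.mul_smul,
        Matrix.one_mul, Matrix.mul_one, smul_add, smul_smul]
      rw [cyc_transpose_mul]
      rw [← hsum, ← hprod]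
      module
    have hs1 : (b • cyc m + x1 • 1).det = x1 ^ (m+3) + (-1:ℂ) ^ (m+2) * b ^ (m+3) := by
      rw [smulForm, keyDet']
    have hs2 : (b • cyc m + x2 • 1).det = x2 ^ (m+3) + (-1:ℂ) ^ (m+2) * b ^ (m+3) := by
      rw [smulForm, keyDet']
    have h := congrArg Matrix.det hfac
    rw [Matrix.det_mul, hs1, hs2, Matrix.det_smul, Matrix.det_mul, cyc_det] at h
    simp only [Fintype.card_fin] at h
    have hxx : x1 ^ (m+3) * x2 ^ (m+3) = b ^ (m+3) * c ^ (m+3) := by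
      rw [← mul_pow, hprod, mul_pow]
    have h3 : b ^ (m+3) * (M.det * (-1:ℂ) ^ (m+2))
        = b ^ (m+3) * (c ^ (m+3) + (-1:ℂ) ^ (m+2) * (x1 ^ (m+3) + x2 ^ (m+3)) + b ^ (m+3)) := by
      rw [← h]
      linear_combination hxx + (b ^ (m+3)) ^ 2 * hε2
    have hD := mul_left_cancel₀ (pow_ne_zero (m+3) hb) h3
    linear_combination (-1:ℂ) ^ (m+2) * hD + (x1 ^ (m+3) + x2 ^ (m+3) - M.det) * hε2
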